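/- arXiv:math/0612534 — 5 statements merged into one kernel-verified Lean document; each statement's English description precedes it below -/
import Mathlib

section
/- Let β, β' ∈ ℝ⁶, R ∈ SO(2) a rotation matrix and t ∈ ℝ², and suppose that R · K(β)(x) · Rᵀ = K(β')(R x + t) for all x ∈ ℝ². Then Δ₂(β') = Δ₂(β), where Δ₂(β) = β₆(β₁+β₂) − β₄² − β₅². That is, Δ₂ is an invariant of the induced action of the special Euclidean group SE(2) on the six-dimensional space of Killing two-tensors of the Euclidean plane. -/
open Real Matrix

/-- The general Killing two-tensor of the Euclidean plane, as a symmetric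
2×2-matrix-valued function of the Cartesian coordinates, with parameters
`β 0, …, β 5` corresponding to `β₁, …, β₆`. -/
noncomputable def Kmat (β : Fin 6 → ℝ) (x : Fin 2 → ℝ) : Matrix (Fin 2) (Fin 2) ℝ :=
  !![β 0 + 2 * β 3 * x 1 + β 5 * (x 1) ^ 2,
     β 2 - β 3 * x 0 - β 4 * x 1 - β 5 * x 0 * x 1;
     β 2 - β 3 * x 0 - β 4 * x 1 - β 5 * x 0 * x 1,
     β 1 + 2 * β 4 * x 0 + β 5 * (x 0) ^ 2]

/-- The rotation matrix of `SO(2)` with angle `θ`. -/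
noncomputable def rot (θ : ℝ) : Matrix (Fin 2) (Fin 2) ℝ :=
  !![Real.cos θ, -Real.sin θ; Real.sin θ, Real.cos θ]

/-- The invariant `Δ₂(β) = β₆(β₁+β₂) − β₄² − β₅²`. -/
def Delta2 (β : Fin 6 → ℝ) : ℝ :=
  β 5 * (β 0 + β 1) - (β 3) ^ 2 - (β 4) ^ 2

/-- `Δ₂` is an invariant of the induced action of `SE(2)` on the six-dimensional
space of Killing two-tensors of the Euclidean plane. -/
theorem Delta2_invariant
    (β β' : Fin 6 → ℝ) (θ : ℝ) (t : Fin 2 → ℝ)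
    (h : ∀ x : Fin 2 → ℝ,
      rot θ * Kmat β x * (rot θ)ᵀ = Kmat β' ((rot θ).mulVec x + t)) :
    Delta2 β' = Delta2 β := by
  have H : ∀ (a b : ℝ) (i j : Fin 2), (rot θ * Kmat β ![a,b] * (rot θ)ᵀ) i j
      = Kmat β' ((rot θ).mulVec ![a,b] + t) i j := fun a b i j => by rw [h ![a,b]]
  have hpy : Real.cos θ ^ 2 + Real.sin θ ^ 2 = 1 := Real.cos_sq_add_sin_sq θ
  have A00 := H 0 0 0 0
  have A11 := H 0 0 1 1
  have B00 := H 1 0 0 0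
  have B11 := H 1 0 1 1
  have C00 := H (-1) 0 0 0
  have C11 := H (-1) 0 1 1
  have D00 := H 0 1 0 0
  have D11 := H 0 1 1 1
  have E00 := H 0 (-1) 0 0
  have E11 := H 0 (-1) 1 1
  simp [Kmat, rot, Matrix.mul_apply, Fin.sum_univ_two, Matrix.mulVec,
    dotProduct, Matrix.transpose_apply, Matrix.vecHead, Matrix.vecTail] at A00 A11 B00 B11 C00 C11 D00 D11 E00 E11
  set c := Real.cos θ
  set s := Real.sin θ
  have h5 : β' 5 = β 5 := by
    linear_combination (-(1:ℝ)/2) * (D00 + E00 - 2*A00 + D11 + E11 - 2*A11)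
      + (β 5 - β' 5) * hpy
  have hp3 : β' 3 = c * β 3 + s * β 4 - β 5 * t 1 := by
    linear_combination (-(c)/4) * (D00 - E00) + (-(s)/4) * (B00 - C00)
      + (c * β 3 + s * β 4 - β' 3 - β' 5 * t 1) * hpy + (-(t 1)) * h5
  have hp4 : β' 4 = c * β 4 - s * β 3 - β 5 * t 0 := by
    linear_combination (-(c)/4) * (B11 - C11) + (s/4) * (D11 - E11)
      + (c * β 4 - s * β 3 - β' 4 - β' 5 * t 0) * hpy + (-(t 0)) * h5
  have hsum : β 0 + β 1 = β' 0 + β' 1 + 2 * β' 3 * t 1 + 2 * β' 4 * t 0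
      + β' 5 * t 0 ^ 2 + β' 5 * t 1 ^ 2 := by
    linear_combination A00 + A11 + (-(β 0 + β 1)) * hpy
  rw [h5, hp3, hp4] at hsum
  simp only [Delta2]
  rw [h5, hp3, hp4]
  linear_combination (-(β 5)) * hsum - (β 3 ^ 2 + β 4 ^ 2) * hpy
end

section
/- Let β, β' ∈ ℝ⁶, R ∈ SO(2) a rotation matrix and t ∈ ℝ², and suppose that R · K(β)(x) · Rᵀ = K(β')(R x + t) for all x ∈ ℝ². Then Δ₃(β') = Δ₃(β), where Δ₃(β) = (β₆(β₁−β₂) − β₄² + β₅²)² + 4(β₆β₃ + β₄β₅)². That is, Δ₃ is an invariant of the induced action of the special Euclidean group SE(2) on the six-dimensional space of Killing two-tensors of the Euclidean plane. -/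
open Real Matrix

/-- The invariant `Δ₃(β) = (β₆(β₁−β₂) − β₄² + β₅²)² + 4(β₆β₃ + β₄β₅)²`. -/
def Delta3 (β : Fin 6 → ℝ) : ℝ :=
  (β 5 * (β 0 - β 1) - (β 3) ^ 2 + (β 4) ^ 2) ^ 2 + 4 * (β 5 * β 2 + β 3 * β 4) ^ 2

/-- `Δ₃` is an invariant of the induced action of `SE(2)` on the six-dimensional
space of Killing two-tensors of the Euclidean plane. -/
theorem Delta3_invariant
    (β β' : Fin 6 → ℝ) (θ : ℝ) (t : Fin 2 → ℝ)
    (h : ∀ x : Fin 2 → ℝ,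
      rot θ * Kmat β x * (rot θ)ᵀ = Kmat β' ((rot θ).mulVec x + t)) :
    Delta3 β' = Delta3 β := by
  set c := Real.cos θ with hc
  set s := Real.sin θ with hs
  have hcs : c ^ 2 + s ^ 2 = 1 := by
    simp [hc, hs, Real.cos_sq_add_sin_sq]
  have e := fun (x : Fin 2 → ℝ) (i j : Fin 2) => congrFun (congrFun (h x) i) j
  have A00 := e ![0,0] 0 0
  have A10 := e ![1,0] 0 0
  have Am10 := e ![-1,0] 0 0
  have A01 := e ![0,1] 0 0
  have A0m1 := e ![0,-1] 0 0
  have B00 := e ![0,0] 1 1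
  have B10 := e ![1,0] 1 1
  have Bm10 := e ![-1,0] 1 1
  have B01 := e ![0,1] 1 1
  have B0m1 := e ![0,-1] 1 1
  have C00 := e ![0,0] 0 1
  simp only [Kmat, rot, Matrix.mul_apply, Matrix.mulVec, dotProduct,
    Fin.sum_univ_two, Matrix.transpose_apply, Pi.add_apply, Matrix.cons_val_zero,
    Matrix.cons_val_one, Matrix.head_cons, Matrix.cons_val', Matrix.head_fin_const,
    Matrix.empty_val', Matrix.cons_val_fin_one, Matrix.of_apply] at A00 A10 Am10 A01 A0m1 B00 B10 Bm10 B01 B0m1 C00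
  have hb5 : β' 5 = β 5 := by
    linear_combination (-(1:ℝ)/2)*(A10 + Am10 + A01 + A0m1) + 2*A00 + (β 5 - β' 5)*hcs
  have hb3 : β' 3 = c * β 3 + s * β 4 - t 1 * β 5 := by
    linear_combination (-(s)/4)*(A10 - Am10) + (-(c)/4)*(A01 - A0m1)
      - (β' 3 + t 1 * β' 5 - c * β 3 - s * β 4)*hcs - (t 1)*hb5
  have hb4 : β' 4 = -s * β 3 + c * β 4 - t 0 * β 5 := by
    linear_combination (-(c)/4)*(B10 - Bm10) + ((s)/4)*(B01 - B0m1)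
      - (β' 4 + t 0 * β' 5 - c * β 4 + s * β 3)*hcs - (t 0)*hb5
  have hb0 : β' 0 = c^2 * β 0 + s^2 * β 1 - 2*c*s*β 2 - 2*c*(t 1)*β 3
      - 2*s*(t 1)*β 4 + (t 1)^2 * β 5 := by
    linear_combination -A00 - 2*(t 1)*hb3 - (t 1)^2*hb5
  have hb1 : β' 1 = s^2 * β 0 + c^2 * β 1 + 2*c*s*β 2 + 2*s*(t 0)*β 3
      - 2*c*(t 0)*β 4 + (t 0)^2 * β 5 := by
    linear_combination -B00 - 2*(t 0)*hb4 - (t 0)^2*hb5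
  have hb2 : β' 2 = c*s*(β 0 - β 1) + (c^2 - s^2)*β 2 + (c*(t 0) - s*(t 1))*β 3
      + (c*(t 1) + s*(t 0))*β 4 - (t 0)*(t 1)*β 5 := by
    linear_combination -C00 + (t 0)*hb3 + (t 1)*hb4 + (t 0)*(t 1)*hb5
  simp only [Delta3]
  rw [hb0, hb1, hb2, hb3, hb4, hb5]
  linear_combination ((1 + c^2 + s^2) *
    ((β 5 * (β 0 - β 1) - β 3 ^ 2 + β 4 ^ 2) ^ 2 + 4 * (β 5 * β 2 + β 3 * β 4) ^ 2)) * hcs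
end

section
/- Let f : (0,∞) → ℝ be smooth and let V : ℝ² ∖ {0} → ℝ be the radial function V(x) = f(‖x‖). Then V satisfies the PDE 3∂₂V + x₂(∂₂₂V − ∂₁₁V) + 2x₁∂₁₂V = 0 on ℝ² ∖ {0} if and only if there exist constants m, n ∈ ℝ such that f(r) = m/r + n for all r > 0. -/
open Real

/-- Partial derivative with respect to the first Cartesian coordinate. -/
noncomputable def pd1 (f : ℝ × ℝ → ℝ) (x : ℝ × ℝ) : ℝ :=
  deriv (fun t => f (t, x.2)) x.1

/-- Partial derivative with respect to the second Cartesian coordinate. -/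
noncomputable def pd2 (f : ℝ × ℝ → ℝ) (x : ℝ × ℝ) : ℝ :=
  deriv (fun t => f (x.1, t)) x.2

/-- The radial function `V(x) = f(‖x‖)` on the punctured plane. -/
noncomputable def radial (f : ℝ → ℝ) : ℝ × ℝ → ℝ :=
  fun x => f (Real.sqrt (x.1 ^ 2 + x.2 ^ 2))

open Topology Filter

private lemma sqrt_hasDeriv {c s : ℝ} (h : 0 < s ^ 2 + c) :
    HasDerivAt (fun u : ℝ => Real.sqrt (u ^ 2 + c)) (s / Real.sqrt (s ^ 2 + c)) s := by
  have h1 : HasDerivAt (fun u : ℝ => u ^ 2 + c) (2 * s) s := by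
    simpa using (hasDerivAt_pow 2 s).add_const c
  have h2 := (Real.hasDerivAt_sqrt (ne_of_gt h)).comp s h1
  have hne : Real.sqrt (s ^ 2 + c) ≠ 0 := ne_of_gt (Real.sqrt_pos.2 h)
  refine h2.congr_deriv ?_
  field_simp

private lemma hda_of_cd {f : ℝ → ℝ} (hf : ContDiffOn ℝ (⊤ : ℕ∞) f (Set.Ioi 0))
    {u : ℝ} (hu : 0 < u) : HasDerivAt f (deriv f u) u :=
  ((hf.differentiableOn (by simp)).differentiableAt
    (isOpen_Ioi.mem_nhds hu)).hasDerivAt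

private lemma cd_deriv {f : ℝ → ℝ} (hf : ContDiffOn ℝ (⊤ : ℕ∞) f (Set.Ioi 0)) :
    ContDiffOn ℝ (⊤ : ℕ∞) (deriv f) (Set.Ioi 0) :=
  hf.deriv_of_isOpen isOpen_Ioi (by exact_mod_cast le_top)

private lemma slice_deriv {f : ℝ → ℝ} (hf : ContDiffOn ℝ (⊤ : ℕ∞) f (Set.Ioi 0))
    (c s : ℝ) (h : 0 < s ^ 2 + c) :
    HasDerivAt (fun u => f (Real.sqrt (u ^ 2 + c)))
      (deriv f (Real.sqrt (s ^ 2 + c)) * (s / Real.sqrt (s ^ 2 + c))) s :=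
  (hda_of_cd hf (Real.sqrt_pos.2 h)).comp s (sqrt_hasDeriv h)

private lemma slice_deriv2 {f : ℝ → ℝ} (hf : ContDiffOn ℝ (⊤ : ℕ∞) f (Set.Ioi 0))
    (c s : ℝ) (h : 0 < s ^ 2 + c) {g : ℝ → ℝ} {g' : ℝ} (hg : HasDerivAt g g' s) :
    HasDerivAt (fun u => deriv f (Real.sqrt (u ^ 2 + c)) * (g u / Real.sqrt (u ^ 2 + c)))
      (deriv (deriv f) (Real.sqrt (s ^ 2 + c)) * (s / Real.sqrt (s ^ 2 + c))
          * (g s / Real.sqrt (s ^ 2 + c))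
        + deriv f (Real.sqrt (s ^ 2 + c))
          * ((g' * Real.sqrt (s ^ 2 + c) - g s * (s / Real.sqrt (s ^ 2 + c)))
              / Real.sqrt (s ^ 2 + c) ^ 2)) s := by
  have hne : Real.sqrt (s ^ 2 + c) ≠ 0 := ne_of_gt (Real.sqrt_pos.2 h)
  have hA : HasDerivAt (fun u => deriv f (Real.sqrt (u ^ 2 + c)))
      (deriv (deriv f) (Real.sqrt (s ^ 2 + c)) * (s / Real.sqrt (s ^ 2 + c))) s :=
    by have := (hda_of_cd (cd_deriv hf) (Real.sqrt_pos.2 h)).comp s (sqrt_hasDeriv h); exact this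
  exact hA.mul (hg.div (sqrt_hasDeriv h) hne)

private lemma P1 {f : ℝ → ℝ} (hf : ContDiffOn ℝ (⊤ : ℕ∞) f (Set.Ioi 0)) (s t : ℝ) (h : 0 < s ^ 2 + t ^ 2) :
    pd1 (radial f) (s, t)
      = deriv f (Real.sqrt (s ^ 2 + t ^ 2)) * (s / Real.sqrt (s ^ 2 + t ^ 2)) := by
  have : (fun u => radial f (u, ((s,t) : ℝ × ℝ).2)) = fun u => f (Real.sqrt (u ^ 2 + t ^ 2)) := rfl
  rw [pd1, this]
  exact (slice_deriv hf (t ^ 2) s h).deriv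

private lemma P2 {f : ℝ → ℝ} (hf : ContDiffOn ℝ (⊤ : ℕ∞) f (Set.Ioi 0)) (s t : ℝ) (h : 0 < t ^ 2 + s ^ 2) :
    pd2 (radial f) (s, t)
      = deriv f (Real.sqrt (t ^ 2 + s ^ 2)) * (t / Real.sqrt (t ^ 2 + s ^ 2)) := by
  have heq : (fun v => radial f (((s,t) : ℝ × ℝ).1, v)) = fun v => f (Real.sqrt (v ^ 2 + s ^ 2)) := by
    funext v; simp only [radial]; rw [add_comm]
  rw [pd2, heq]
  exact (slice_deriv hf (s ^ 2) t h).deriv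

private lemma P11 {f : ℝ → ℝ} (hf : ContDiffOn ℝ (⊤ : ℕ∞) f (Set.Ioi 0)) (s t : ℝ)
    (h : 0 < s ^ 2 + t ^ 2) :
    pd1 (pd1 (radial f)) (s, t)
      = deriv (deriv f) (Real.sqrt (s ^ 2 + t ^ 2)) * (s / Real.sqrt (s ^ 2 + t ^ 2))
          * (s / Real.sqrt (s ^ 2 + t ^ 2))
        + deriv f (Real.sqrt (s ^ 2 + t ^ 2))
          * ((1 * Real.sqrt (s ^ 2 + t ^ 2) - s * (s / Real.sqrt (s ^ 2 + t ^ 2)))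
              / Real.sqrt (s ^ 2 + t ^ 2) ^ 2) := by
  have hev : ∀ᶠ u in 𝓝 s, 0 < u ^ 2 + t ^ 2 := by
    have hop : IsOpen {u : ℝ | 0 < u ^ 2 + t ^ 2} := isOpen_lt continuous_const (by fun_prop)
    exact hop.mem_nhds h
  have heq : (fun u => pd1 (radial f) (u, t)) =ᶠ[𝓝 s]
      (fun u => deriv f (Real.sqrt (u ^ 2 + t ^ 2)) * (u / Real.sqrt (u ^ 2 + t ^ 2))) :=
    hev.mono fun u hu => P1 hf u t hu
  have h0 : pd1 (pd1 (radial f)) (s, t) = deriv (fun u => pd1 (radial f) (u, t)) s := rfl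
  rw [h0, heq.deriv_eq]
  exact (slice_deriv2 hf (t ^ 2) s h (hasDerivAt_id' (x := s))).deriv

private lemma P22 {f : ℝ → ℝ} (hf : ContDiffOn ℝ (⊤ : ℕ∞) f (Set.Ioi 0)) (s t : ℝ)
    (h : 0 < t ^ 2 + s ^ 2) :
    pd2 (pd2 (radial f)) (s, t)
      = deriv (deriv f) (Real.sqrt (t ^ 2 + s ^ 2)) * (t / Real.sqrt (t ^ 2 + s ^ 2))
          * (t / Real.sqrt (t ^ 2 + s ^ 2))
        + deriv f (Real.sqrt (t ^ 2 + s ^ 2))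
          * ((1 * Real.sqrt (t ^ 2 + s ^ 2) - t * (t / Real.sqrt (t ^ 2 + s ^ 2)))
              / Real.sqrt (t ^ 2 + s ^ 2) ^ 2) := by
  have hev : ∀ᶠ v in 𝓝 t, 0 < v ^ 2 + s ^ 2 := by
    have hop : IsOpen {v : ℝ | 0 < v ^ 2 + s ^ 2} := isOpen_lt continuous_const (by fun_prop)
    exact hop.mem_nhds h
  have heq : (fun v => pd2 (radial f) (s, v)) =ᶠ[𝓝 t]
      (fun v => deriv f (Real.sqrt (v ^ 2 + s ^ 2)) * (v / Real.sqrt (v ^ 2 + s ^ 2))) :=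
    hev.mono fun v hv => P2 hf s v hv
  have h0 : pd2 (pd2 (radial f)) (s, t) = deriv (fun v => pd2 (radial f) (s, v)) t := rfl
  rw [h0, heq.deriv_eq]
  exact (slice_deriv2 hf (s ^ 2) t h (hasDerivAt_id' (x := t))).deriv

private lemma P12 {f : ℝ → ℝ} (hf : ContDiffOn ℝ (⊤ : ℕ∞) f (Set.Ioi 0)) (s t : ℝ)
    (h : 0 < s ^ 2 + t ^ 2) :
    pd1 (pd2 (radial f)) (s, t)
      = deriv (deriv f) (Real.sqrt (s ^ 2 + t ^ 2)) * (s / Real.sqrt (s ^ 2 + t ^ 2))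
          * (t / Real.sqrt (s ^ 2 + t ^ 2))
        + deriv f (Real.sqrt (s ^ 2 + t ^ 2))
          * ((0 * Real.sqrt (s ^ 2 + t ^ 2) - t * (s / Real.sqrt (s ^ 2 + t ^ 2)))
              / Real.sqrt (s ^ 2 + t ^ 2) ^ 2) := by
  have hev : ∀ᶠ u in 𝓝 s, 0 < u ^ 2 + t ^ 2 := by
    have hop : IsOpen {u : ℝ | 0 < u ^ 2 + t ^ 2} := isOpen_lt continuous_const (by fun_prop)
    exact hop.mem_nhds h
  have heq : (fun u => pd2 (radial f) (u, t)) =ᶠ[𝓝 s]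
      (fun u => deriv f (Real.sqrt (u ^ 2 + t ^ 2)) * (t / Real.sqrt (u ^ 2 + t ^ 2))) := by
    refine hev.mono fun u hu => ?_
    show pd2 (radial f) (u, t) = _
    rw [P2 hf u t (by linarith), add_comm (t ^ 2) (u ^ 2)]
  have h0 : pd1 (pd2 (radial f)) (s, t) = deriv (fun u => pd2 (radial f) (u, t)) s := rfl
  rw [h0, heq.deriv_eq]
  exact (slice_deriv2 hf (t ^ 2) s h (hasDerivAt_const s t)).deriv

private lemma radial_pde_eq {f : ℝ → ℝ} (hf : ContDiffOn ℝ (⊤ : ℕ∞) f (Set.Ioi 0))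
    (x : ℝ × ℝ) (hx : x ≠ 0) :
    3 * pd2 (radial f) x
        + x.2 * (pd2 (pd2 (radial f)) x - pd1 (pd1 (radial f)) x)
        + 2 * x.1 * pd1 (pd2 (radial f)) x
      = x.2 * (deriv (deriv f) (Real.sqrt (x.1 ^ 2 + x.2 ^ 2))
          + 2 * deriv f (Real.sqrt (x.1 ^ 2 + x.2 ^ 2)) / Real.sqrt (x.1 ^ 2 + x.2 ^ 2)) := by
  obtain ⟨s, t⟩ := x
  have h : 0 < s ^ 2 + t ^ 2 := by
    have h' : s ≠ 0 ∨ t ≠ 0 := by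
      by_contra hc; push_neg at hc; exact hx (Prod.ext hc.1 hc.2)
    rcases h' with h' | h'
    · nlinarith [sq_nonneg t, mul_self_pos.mpr h']
    · nlinarith [sq_nonneg s, mul_self_pos.mpr h']
  have h2 : 0 < t ^ 2 + s ^ 2 := by linarith
  simp only
  rw [P2 hf s t h2, P11 hf s t h, P22 hf s t h2, P12 hf s t h, add_comm (t ^ 2) (s ^ 2)]
  have hρpos : 0 < Real.sqrt (s ^ 2 + t ^ 2) := Real.sqrt_pos.2 h
  have hρ : Real.sqrt (s ^ 2 + t ^ 2) ≠ 0 := ne_of_gt hρpos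
  have hsq : Real.sqrt (s ^ 2 + t ^ 2) ^ 2 = s ^ 2 + t ^ 2 := Real.sq_sqrt h.le
  set ρ := Real.sqrt (s ^ 2 + t ^ 2) with hρdef
  field_simp
  linear_combination (t * deriv f ρ - t * ρ * deriv (deriv f) ρ) * hsq

private lemma const_on_Ioi {g : ℝ → ℝ} (hg : ∀ r ∈ Set.Ioi (0:ℝ), HasDerivAt g 0 r) :
    ∀ r ∈ Set.Ioi (0:ℝ), g r = g 1 := by
  have hd : DifferentiableOn ℝ g (interior (Set.Ioi (0:ℝ))) := by
    rw [interior_Ioi]; exact fun r hr => (hg r hr).differentiableAt.differentiableWithinAt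
  have hc : ContinuousOn g (Set.Ioi (0:ℝ)) := fun r hr =>
    (hg r hr).differentiableAt.continuousAt.continuousWithinAt
  have h0 : ∀ x ∈ interior (Set.Ioi (0:ℝ)), deriv g x = 0 := by
    rw [interior_Ioi]; exact fun r hr => (hg r hr).deriv
  have hmono := monotoneOn_of_deriv_nonneg (convex_Ioi 0) hc hd (fun x hx => (h0 x hx).ge)
  have hanti := antitoneOn_of_deriv_nonpos (convex_Ioi 0) hc hd (fun x hx => (h0 x hx).le)
  intro r hr
  have h1 : (1:ℝ) ∈ Set.Ioi (0:ℝ) := by norm_num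
  rcases le_total r 1 with h | h
  · exact le_antisymm (hmono hr h1 h) (hanti hr h1 h)
  · exact le_antisymm (hanti h1 hr h) (hmono h1 hr h)

/-- A radial potential `V(x) = f(‖x‖)` satisfies the Bertrand–Darboux PDE of the
parabolic Killing tensor `K(0,0,0,0,1,0)`, namely
`3∂₂V + x₂(∂₂₂V − ∂₁₁V) + 2x₁∂₁₂V = 0` on `ℝ² ∖ {0}`, if and only if
`f(r) = m/r + n` for some constants `m, n`. -/
theorem radial_parabolic_pde_iff_kepler
    (f : ℝ → ℝ) (hf : ContDiffOn ℝ (⊤ : ℕ∞) f (Set.Ioi 0)) :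
    (∀ x : ℝ × ℝ, x ≠ 0 →
      3 * pd2 (radial f) x
        + x.2 * (pd2 (pd2 (radial f)) x - pd1 (pd1 (radial f)) x)
        + 2 * x.1 * pd1 (pd2 (radial f)) x = 0) ↔
    ∃ m n : ℝ, ∀ r : ℝ, 0 < r → f r = m / r + n := by
  have hfd : ∀ u : ℝ, 0 < u → HasDerivAt f (deriv f u) u := fun u hu => hda_of_cd hf hu
  have hfd' : ∀ u : ℝ, 0 < u → HasDerivAt (deriv f) (deriv (deriv f) u) u :=
    fun u hu => hda_of_cd (cd_deriv hf) hu
  constructor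
  · intro h
    -- Step 1: the ODE f'' + 2 f' / r = 0 on (0, ∞)
    have ode : ∀ r : ℝ, 0 < r → deriv (deriv f) r + 2 * deriv f r / r = 0 := by
      intro r hr
      have hx : ((0:ℝ), r) ≠ (0 : ℝ × ℝ) := by
        simp only [ne_eq, Prod.ext_iff, not_and]
        intro _; exact ne_of_gt hr
      have h0 := h (0, r) hx
      rw [radial_pde_eq hf (0, r) hx] at h0
      have hs : Real.sqrt (((0:ℝ), r).1 ^ 2 + ((0:ℝ), r).2 ^ 2) = r := by
        simp [Real.sqrt_sq hr.le]
      rw [hs] at h0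
      have : ((0:ℝ), r).2 = r := rfl
      rw [this] at h0
      exact (mul_eq_zero.1 h0).resolve_left (ne_of_gt hr)
    -- Step 2: r^2 * f' r is constant
    have hg : ∀ r ∈ Set.Ioi (0:ℝ), HasDerivAt (fun u => u ^ 2 * deriv f u) 0 r := by
      intro r hr
      rw [Set.mem_Ioi] at hr
      have hd := (hasDerivAt_pow 2 r).mul (hfd' r hr)
      refine hd.congr_deriv ?_
      have h1 := ode r hr
      have hrne : r ≠ 0 := ne_of_gt hr
      field_simp at h1
      push_cast
      linear_combination r * h1
    have hconst := const_on_Ioi hg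
    set c := (fun u : ℝ => u ^ 2 * deriv f u) 1 with hc
    have hderiv : ∀ r : ℝ, 0 < r → deriv f r = c / r ^ 2 := by
      intro r hr
      have h4 : r ^ 2 * deriv f r = c := hconst r (Set.mem_Ioi.2 hr)
      rw [eq_div_iff (pow_ne_zero 2 (ne_of_gt hr))]
      linear_combination h4
    -- Step 3: f r + c / r is constant
    have hF : ∀ r ∈ Set.Ioi (0:ℝ), HasDerivAt (fun u => f u + c / u) 0 r := by
      intro r hr
      rw [Set.mem_Ioi] at hr
      have hrne : r ≠ 0 := ne_of_gt hr
      have h2 : HasDerivAt (fun u : ℝ => c / u) (c * -(r ^ 2)⁻¹) r := by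
        have hi := (hasDerivAt_inv hrne).const_mul c
        have heq : (fun u : ℝ => c / u) = fun u : ℝ => c * u⁻¹ := by
          funext u; rw [div_eq_mul_inv]
        rw [heq]; exact hi
      have h3 := (hfd r hr).add h2
      refine h3.congr_deriv ?_
      rw [hderiv r hr]
      field_simp
      ring
    have hFc := const_on_Ioi hF
    refine ⟨-c, f 1 + c / 1, fun r hr => ?_⟩
    have := hFc r (Set.mem_Ioi.2 hr)
    have hrne : r ≠ 0 := ne_of_gt hr
    have hcr : -c / r = -(c / r) := by ring
    rw [hcr]
    linarith [this]
  · rintro ⟨m, n, hmn⟩ x hx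
    rw [radial_pde_eq hf x hx]
    have hpos : 0 < x.1 ^ 2 + x.2 ^ 2 := by
      have h' : x.1 ≠ 0 ∨ x.2 ≠ 0 := by
        by_contra hc; push_neg at hc; exact hx (Prod.ext hc.1 hc.2)
      rcases h' with h' | h'
      · nlinarith [sq_nonneg x.2, mul_self_pos.mpr h']
      · nlinarith [sq_nonneg x.1, mul_self_pos.mpr h']
    set ρ := Real.sqrt (x.1 ^ 2 + x.2 ^ 2) with hρdef
    have hρpos : 0 < ρ := Real.sqrt_pos.2 hpos
    have hρ : ρ ≠ 0 := ne_of_gt hρpos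
    have h1 : ∀ r : ℝ, 0 < r → deriv f r = -m / r ^ 2 := by
      intro r hr
      have hev : f =ᶠ[𝓝 r] fun u => m / u + n := by
        filter_upwards [isOpen_Ioi.mem_nhds hr] with u hu using hmn u hu
      rw [hev.deriv_eq]
      have hd : HasDerivAt (fun u : ℝ => m / u + n) (-m / r ^ 2) r := by
        have hi := ((hasDerivAt_inv (ne_of_gt hr)).const_mul m).add_const n
        have heq : (fun u : ℝ => m / u + n) = fun u : ℝ => m * u⁻¹ + n := by
          funext u; rw [div_eq_mul_inv]
        rw [heq]
        refine hi.congr_deriv ?_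
        field_simp
      exact hd.deriv
    have h2 : deriv (deriv f) ρ = 2 * m / ρ ^ 3 := by
      have hev : deriv f =ᶠ[𝓝 ρ] fun u => -m / u ^ 2 := by
        filter_upwards [isOpen_Ioi.mem_nhds hρpos] with u hu using h1 u hu
      rw [hev.deriv_eq]
      have hd : HasDerivAt (fun u : ℝ => -m / u ^ 2) (2 * m / ρ ^ 3) ρ := by
        have hb := ((hasDerivAt_pow 2 ρ).inv (pow_ne_zero 2 hρ)).const_mul (-m)
        have heq : (fun u : ℝ => -m / u ^ 2) = fun u : ℝ => -m * (u ^ 2)⁻¹ := by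
          funext u; rw [div_eq_mul_inv]
        rw [heq]
        refine hb.congr_deriv ?_
        push_cast
        field_simp
      exact hd.deriv
    rw [h2, h1 ρ hρpos]
    field_simp
    ring
end

section
/- Let V : ℝ² ∖ {0} → ℝ be smooth. Then V satisfies on ℝ² ∖ {0} all three PDEs (P) 3x₂∂₁V − 3x₁∂₂V + x₁x₂(∂₁₁V − ∂₂₂V) + (x₂² − x₁²)∂₁₂V = 0, (X) 3∂₁V + x₁(∂₁₁V − ∂₂₂V) + 2x₂∂₁₂V = 0, and (Y) 3∂₂V + x₂(∂₂₂V − ∂₁₁V) + 2x₁∂₁₂V = 0, if and only if there exist constants m, n ∈ ℝ such that V(x) = m/‖x‖ + n for all x ∈ ℝ² ∖ {0}; i.e., V is, up to an additive constant and overall scale, the Kepler potential. -/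
open Real

lemma hasDerivAt_line1 (f : ℝ × ℝ → ℝ) (x : ℝ × ℝ) (hf : DifferentiableAt ℝ f x) :
    HasDerivAt (fun t => f (t, x.2)) (fderiv ℝ f x (1, 0)) x.1 := by
  have h1 : HasDerivAt (fun t : ℝ => (t, x.2)) ((1 : ℝ), (0 : ℝ)) x.1 :=
    (hasDerivAt_id x.1).prodMk (hasDerivAt_const _ _)
  exact hf.hasFDerivAt.comp_hasDerivAt x.1 h1

lemma hasDerivAt_line2 (f : ℝ × ℝ → ℝ) (x : ℝ × ℝ) (hf : DifferentiableAt ℝ f x) :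
    HasDerivAt (fun t => f (x.1, t)) (fderiv ℝ f x (0, 1)) x.2 := by
  have h1 : HasDerivAt (fun t : ℝ => (x.1, t)) ((0 : ℝ), (1 : ℝ)) x.2 :=
    (hasDerivAt_const _ _).prodMk (hasDerivAt_id x.2)
  exact hf.hasFDerivAt.comp_hasDerivAt x.2 h1

lemma pd1_eq_fderiv (f : ℝ × ℝ → ℝ) (x : ℝ × ℝ) (hf : DifferentiableAt ℝ f x) :
    pd1 f x = fderiv ℝ f x (1, 0) := (hasDerivAt_line1 f x hf).deriv

lemma pd2_eq_fderiv (f : ℝ × ℝ → ℝ) (x : ℝ × ℝ) (hf : DifferentiableAt ℝ f x) :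
    pd2 f x = fderiv ℝ f x (0, 1) := (hasDerivAt_line2 f x hf).deriv

lemma hasDerivAt_pd (f : ℝ × ℝ → ℝ) (x : ℝ × ℝ) (hf : DifferentiableAt ℝ f x)
    (c : ℝ → ℝ × ℝ) (c' : ℝ × ℝ) (t : ℝ) (hc : HasDerivAt c c' t) (hct : c t = x) :
    HasDerivAt (fun s => f (c s)) (c'.1 * pd1 f x + c'.2 * pd2 f x) t := by
  subst hct
  have := hf.hasFDerivAt.comp_hasDerivAt t hc
  set x := c t
  have hv : (fderiv ℝ f x) c' = c'.1 * pd1 f x + c'.2 * pd2 f x := by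
    rw [pd1_eq_fderiv f x hf, pd2_eq_fderiv f x hf]
    have : c' = c'.1 • ((1:ℝ), (0:ℝ)) + c'.2 • ((0:ℝ), (1:ℝ)) := by
      simp [Prod.ext_iff]
    nth_rewrite 1 [this]
    rw [map_add, map_smul, map_smul]
    simp [smul_eq_mul]
  rwa [hv] at this



-- explicit Kepler derivative lemmas
lemma L1 (m n y : ℝ) {t : ℝ} (h : 0 < t ^ 2 + y ^ 2) :
    HasDerivAt (fun s => m / Real.sqrt (s ^ 2 + y ^ 2) + n)
      (-m * t / (Real.sqrt (t ^ 2 + y ^ 2)) ^ 3) t := by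
  have hq : HasDerivAt (fun s : ℝ => s ^ 2 + y ^ 2) (2 * t) t := by
    simpa using ((hasDerivAt_pow 2 t).add_const (y ^ 2))
  have hr : 0 < Real.sqrt (t ^ 2 + y ^ 2) := Real.sqrt_pos.2 h
  have hs : HasDerivAt (fun s : ℝ => Real.sqrt (s ^ 2 + y ^ 2))
      (1 / (2 * Real.sqrt (t ^ 2 + y ^ 2)) * (2 * t)) t :=
    (Real.hasDerivAt_sqrt h.ne').comp t hq
  have hd : HasDerivAt (fun s : ℝ => m / Real.sqrt (s ^ 2 + y ^ 2))
      ((0 * Real.sqrt (t ^ 2 + y ^ 2) - m * (1 / (2 * Real.sqrt (t ^ 2 + y ^ 2)) * (2 * t))) /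
        (Real.sqrt (t ^ 2 + y ^ 2)) ^ 2) t :=
    (hasDerivAt_const t m).div hs hr.ne'
  have h2 : (Real.sqrt (t ^ 2 + y ^ 2)) ^ 2 = t ^ 2 + y ^ 2 := Real.sq_sqrt h.le
  have := hd.add_const n
  refine this.congr_deriv ?_
  symm
  field_simp
  linear_combination (0:ℝ) * h2

lemma L1b (m n y : ℝ) {t : ℝ} (h : 0 < y ^ 2 + t ^ 2) :
    HasDerivAt (fun s => m / Real.sqrt (y ^ 2 + s ^ 2) + n)
      (-m * t / (Real.sqrt (y ^ 2 + t ^ 2)) ^ 3) t := by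
  have h' : 0 < t ^ 2 + y ^ 2 := by linarith
  have := L1 m n y h'
  simp only [add_comm _ (y ^ 2)] at this
  convert this using 2 <;> rw [add_comm]

lemma sqrt3_deriv (y : ℝ) {t : ℝ} (h : 0 < t ^ 2 + y ^ 2) :
    HasDerivAt (fun s : ℝ => (Real.sqrt (s ^ 2 + y ^ 2)) ^ 3)
      (3 * Real.sqrt (t ^ 2 + y ^ 2) * t) t := by
  have hq : HasDerivAt (fun s : ℝ => s ^ 2 + y ^ 2) (2 * t) t := by
    simpa using ((hasDerivAt_pow 2 t).add_const (y ^ 2))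
  have hr : 0 < Real.sqrt (t ^ 2 + y ^ 2) := Real.sqrt_pos.2 h
  have hs : HasDerivAt (fun s : ℝ => Real.sqrt (s ^ 2 + y ^ 2))
      (1 / (2 * Real.sqrt (t ^ 2 + y ^ 2)) * (2 * t)) t :=
    (Real.hasDerivAt_sqrt h.ne').comp t hq
  have := hs.pow 3
  refine this.congr_deriv ?_
  symm
  have h2 : (Real.sqrt (t ^ 2 + y ^ 2)) ^ 2 = t ^ 2 + y ^ 2 := Real.sq_sqrt h.le
  field_simp
  linear_combination (0:ℝ) * h2

lemma L2 (m y : ℝ) {t : ℝ} (h : 0 < t ^ 2 + y ^ 2) :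
    HasDerivAt (fun s => m * s / (Real.sqrt (s ^ 2 + y ^ 2)) ^ 3)
      (m * ((t ^ 2 + y ^ 2) - 3 * t ^ 2) / (Real.sqrt (t ^ 2 + y ^ 2)) ^ 5) t := by
  have hr : 0 < Real.sqrt (t ^ 2 + y ^ 2) := Real.sqrt_pos.2 h
  have h2 : (Real.sqrt (t ^ 2 + y ^ 2)) ^ 2 = t ^ 2 + y ^ 2 := Real.sq_sqrt h.le
  have hn : HasDerivAt (fun s : ℝ => m * s) m t := by
    simpa using (hasDerivAt_id t).const_mul m
  have hd := hn.div (sqrt3_deriv y h) (pow_ne_zero 3 hr.ne')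
  refine hd.congr_deriv ?_
  symm
  field_simp
  linear_combination (-m) * h2

lemma L2b (m y : ℝ) {t : ℝ} (h : 0 < y ^ 2 + t ^ 2) :
    HasDerivAt (fun s => m * s / (Real.sqrt (y ^ 2 + s ^ 2)) ^ 3)
      (m * ((y ^ 2 + t ^ 2) - 3 * t ^ 2) / (Real.sqrt (y ^ 2 + t ^ 2)) ^ 5) t := by
  have h' : 0 < t ^ 2 + y ^ 2 := by linarith
  have := L2 m y h'
  simp only [add_comm _ (y ^ 2)] at this
  convert this using 2 <;> rw [add_comm]

lemma L3 (c y : ℝ) {t : ℝ} (h : 0 < t ^ 2 + y ^ 2) :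
    HasDerivAt (fun s => c / (Real.sqrt (s ^ 2 + y ^ 2)) ^ 3)
      (-3 * c * t / (Real.sqrt (t ^ 2 + y ^ 2)) ^ 5) t := by
  have hr : 0 < Real.sqrt (t ^ 2 + y ^ 2) := Real.sqrt_pos.2 h
  have h2 : (Real.sqrt (t ^ 2 + y ^ 2)) ^ 2 = t ^ 2 + y ^ 2 := Real.sq_sqrt h.le
  have hd := (hasDerivAt_const t c).div (sqrt3_deriv y h) (pow_ne_zero 3 hr.ne')
  refine hd.congr_deriv ?_
  symm
  field_simp
  ring



lemma pos_of_ne (x : ℝ × ℝ) (hx : x ≠ 0) : 0 < x.1 ^ 2 + x.2 ^ 2 := by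
  rcases lt_or_eq_of_le (by positivity : (0:ℝ) ≤ x.1 ^ 2 + x.2 ^ 2) with h | h
  · exact h
  · exfalso; apply hx
    have h1 : x.1 = 0 := by nlinarith [sq_nonneg x.1, sq_nonneg x.2]
    have h2 : x.2 = 0 := by nlinarith [sq_nonneg x.1, sq_nonneg x.2]
    exact Prod.ext h1 h2

-- eventual nonvanishing along horizontal/vertical lines
lemma ev1 (x : ℝ × ℝ) (hx : x ≠ 0) : ∀ᶠ t in nhds x.1, ((t, x.2) : ℝ × ℝ) ≠ 0 := by
  have hc : Continuous (fun t : ℝ => ((t, x.2) : ℝ × ℝ)) := by continuity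
  have : IsOpen {t : ℝ | ((t, x.2) : ℝ × ℝ) ≠ 0} := isOpen_ne.preimage hc
  exact this.mem_nhds (by simp only [Set.mem_setOf_eq, Prod.mk.eta]; exact hx)

lemma ev2 (x : ℝ × ℝ) (hx : x ≠ 0) : ∀ᶠ t in nhds x.2, ((x.1, t) : ℝ × ℝ) ≠ 0 := by
  have hc : Continuous (fun t : ℝ => ((x.1, t) : ℝ × ℝ)) := by continuity
  have : IsOpen {t : ℝ | ((x.1, t) : ℝ × ℝ) ≠ 0} := isOpen_ne.preimage hc
  exact this.mem_nhds (by simp only [Set.mem_setOf_eq, Prod.mk.eta]; exact hx)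

section Rev
variable (V : ℝ × ℝ → ℝ) (m n : ℝ)
  (hK : ∀ x : ℝ × ℝ, x ≠ 0 → V x = m / Real.sqrt (x.1 ^ 2 + x.2 ^ 2) + n)

include hK

lemma hp1 : ∀ x : ℝ × ℝ, x ≠ 0 →
    pd1 V x = -m * x.1 / (Real.sqrt (x.1 ^ 2 + x.2 ^ 2)) ^ 3 := by
  intro x hx
  have hev : (fun t => V (t, x.2)) =ᶠ[nhds x.1]
      (fun t => m / Real.sqrt (t ^ 2 + x.2 ^ 2) + n) :=
    (ev1 x hx).mono fun t ht => hK (t, x.2) ht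
  rw [pd1, hev.deriv_eq]
  exact (L1 m n x.2 (pos_of_ne x hx)).deriv

lemma hp2 : ∀ x : ℝ × ℝ, x ≠ 0 →
    pd2 V x = -m * x.2 / (Real.sqrt (x.1 ^ 2 + x.2 ^ 2)) ^ 3 := by
  intro x hx
  have hev : (fun t => V (x.1, t)) =ᶠ[nhds x.2]
      (fun t => m / Real.sqrt (x.1 ^ 2 + t ^ 2) + n) :=
    (ev2 x hx).mono fun t ht => hK (x.1, t) ht
  rw [pd2, hev.deriv_eq]
  exact (L1b m n x.1 (pos_of_ne x hx)).deriv

lemma hp11 : ∀ x : ℝ × ℝ, x ≠ 0 →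
    pd1 (pd1 V) x = -m * ((x.1 ^ 2 + x.2 ^ 2) - 3 * x.1 ^ 2)
      / (Real.sqrt (x.1 ^ 2 + x.2 ^ 2)) ^ 5 := by
  intro x hx
  have hev : (fun t => pd1 V (t, x.2)) =ᶠ[nhds x.1]
      (fun t => -m * t / (Real.sqrt (t ^ 2 + x.2 ^ 2)) ^ 3) :=
    (ev1 x hx).mono fun t ht => hp1 V m n hK (t, x.2) ht
  rw [pd1, hev.deriv_eq]
  exact (L2 (-m) x.2 (pos_of_ne x hx)).deriv

lemma hp22 : ∀ x : ℝ × ℝ, x ≠ 0 →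
    pd2 (pd2 V) x = -m * ((x.1 ^ 2 + x.2 ^ 2) - 3 * x.2 ^ 2)
      / (Real.sqrt (x.1 ^ 2 + x.2 ^ 2)) ^ 5 := by
  intro x hx
  have hev : (fun t => pd2 V (x.1, t)) =ᶠ[nhds x.2]
      (fun t => -m * t / (Real.sqrt (x.1 ^ 2 + t ^ 2)) ^ 3) :=
    (ev2 x hx).mono fun t ht => hp2 V m n hK (x.1, t) ht
  rw [pd2, hev.deriv_eq]
  exact (L2b (-m) x.1 (pos_of_ne x hx)).deriv

lemma hp12 : ∀ x : ℝ × ℝ, x ≠ 0 →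
    pd1 (pd2 V) x = -3 * (-m * x.2) * x.1
      / (Real.sqrt (x.1 ^ 2 + x.2 ^ 2)) ^ 5 := by
  intro x hx
  have hev : (fun t => pd2 V (t, x.2)) =ᶠ[nhds x.1]
      (fun t => -m * x.2 / (Real.sqrt (t ^ 2 + x.2 ^ 2)) ^ 3) :=
    (ev1 x hx).mono fun t ht => hp2 V m n hK (t, x.2) ht
  rw [pd1, hev.deriv_eq]
  exact (L3 (-m * x.2) x.2 (pos_of_ne x hx)).deriv

end Rev

section Rev2
variable (V : ℝ × ℝ → ℝ) (m n : ℝ)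
  (hK : ∀ x : ℝ × ℝ, x ≠ 0 → V x = m / Real.sqrt (x.1 ^ 2 + x.2 ^ 2) + n)

include hK

lemma revP : ∀ x : ℝ × ℝ, x ≠ 0 →
    3 * x.2 * pd1 V x - 3 * x.1 * pd2 V x
      + x.1 * x.2 * (pd1 (pd1 V) x - pd2 (pd2 V) x)
      + (x.2 ^ 2 - x.1 ^ 2) * pd1 (pd2 V) x = 0 := by
  intro x hx
  have hq := pos_of_ne x hx
  have hr : 0 < Real.sqrt (x.1 ^ 2 + x.2 ^ 2) := Real.sqrt_pos.2 hq
  have hr2 : (Real.sqrt (x.1 ^ 2 + x.2 ^ 2)) ^ 2 = x.1 ^ 2 + x.2 ^ 2 := Real.sq_sqrt hq.le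
  rw [hp1 V m n hK x hx, hp2 V m n hK x hx, hp11 V m n hK x hx,
    hp22 V m n hK x hx, hp12 V m n hK x hx]
  field_simp
  ring

lemma revX : ∀ x : ℝ × ℝ, x ≠ 0 →
    3 * pd1 V x + x.1 * (pd1 (pd1 V) x - pd2 (pd2 V) x)
      + 2 * x.2 * pd1 (pd2 V) x = 0 := by
  intro x hx
  have hq := pos_of_ne x hx
  have hr : 0 < Real.sqrt (x.1 ^ 2 + x.2 ^ 2) := Real.sqrt_pos.2 hq
  have hr2 : (Real.sqrt (x.1 ^ 2 + x.2 ^ 2)) ^ 2 = x.1 ^ 2 + x.2 ^ 2 := Real.sq_sqrt hq.le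
  rw [hp1 V m n hK x hx, hp11 V m n hK x hx,
    hp22 V m n hK x hx, hp12 V m n hK x hx]
  field_simp
  linear_combination (-(3 * m * x.1)) * hr2

lemma revY : ∀ x : ℝ × ℝ, x ≠ 0 →
    3 * pd2 V x + x.2 * (pd2 (pd2 V) x - pd1 (pd1 V) x)
      + 2 * x.1 * pd1 (pd2 V) x = 0 := by
  intro x hx
  have hq := pos_of_ne x hx
  have hr : 0 < Real.sqrt (x.1 ^ 2 + x.2 ^ 2) := Real.sqrt_pos.2 hq
  have hr2 : (Real.sqrt (x.1 ^ 2 + x.2 ^ 2)) ^ 2 = x.1 ^ 2 + x.2 ^ 2 := Real.sq_sqrt hq.le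
  rw [hp2 V m n hK x hx, hp11 V m n hK x hx,
    hp22 V m n hK x hx, hp12 V m n hK x hx]
  field_simp
  linear_combination (-(3 * m * x.2)) * hr2

end Rev2

lemma hasDerivAt_pdline1 (f : ℝ × ℝ → ℝ) (x : ℝ × ℝ) (hf : DifferentiableAt ℝ f x) :
    HasDerivAt (fun t => f (t, x.2)) (pd1 f x) x.1 := by
  rw [pd1_eq_fderiv f x hf]; exact hasDerivAt_line1 f x hf

lemma hasDerivAt_pdline2 (f : ℝ × ℝ → ℝ) (x : ℝ × ℝ) (hf : DifferentiableAt ℝ f x) :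
    HasDerivAt (fun t => f (x.1, t)) (pd2 f x) x.2 := by
  rw [pd2_eq_fderiv f x hf]; exact hasDerivAt_line2 f x hf

lemma const_Ioi (f : ℝ → ℝ) (hf : ∀ t ∈ Set.Ioi (0:ℝ), HasDerivAt f 0 t)
    {a b : ℝ} (ha : 0 < a) (hb : 0 < b) : f a = f b := by
  refine (convex_Ioi (0:ℝ)).is_const_of_fderivWithin_eq_zero
    (fun t ht => ((hf t ht).differentiableAt).differentiableWithinAt) (fun t ht => ?_) ha hb
  rw [fderivWithin_of_isOpen isOpen_Ioi ht, (hf t ht).hasFDerivAt.fderiv]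
  ext v; simp

section Fwd
variable (V : ℝ × ℝ → ℝ) (hV : ContDiffOn ℝ (⊤ : ℕ∞) V {x : ℝ × ℝ | x ≠ 0})

include hV

lemma hVat : ∀ x : ℝ × ℝ, x ≠ 0 → ContDiffAt ℝ ((⊤:ℕ∞) : WithTop ℕ∞) V x :=
  fun x hx => hV.contDiffAt (isOpen_ne.mem_nhds hx)

lemma hp1smooth : ∀ x : ℝ × ℝ, x ≠ 0 → ContDiffAt ℝ ((⊤:ℕ∞) : WithTop ℕ∞) (pd1 V) x := by
  intro x hx
  have hfd : ContDiffAt ℝ ((⊤:ℕ∞) : WithTop ℕ∞) (fun y => fderiv ℝ V y (1, 0)) x :=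
    ((hVat V hV x hx).fderiv_right (by exact_mod_cast le_top)).clm_apply contDiffAt_const
  apply hfd.congr_of_eventuallyEq
  filter_upwards [isOpen_ne.mem_nhds hx] with y hy
  exact pd1_eq_fderiv V y ((hVat V hV y hy).differentiableAt (by simp))

lemma hp2smooth : ∀ x : ℝ × ℝ, x ≠ 0 → ContDiffAt ℝ ((⊤:ℕ∞) : WithTop ℕ∞) (pd2 V) x := by
  intro x hx
  have hfd : ContDiffAt ℝ ((⊤:ℕ∞) : WithTop ℕ∞) (fun y => fderiv ℝ V y (0, 1)) x :=
    ((hVat V hV x hx).fderiv_right (by exact_mod_cast le_top)).clm_apply contDiffAt_const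
  apply hfd.congr_of_eventuallyEq
  filter_upwards [isOpen_ne.mem_nhds hx] with y hy
  exact pd2_eq_fderiv V y ((hVat V hV y hy).differentiableAt (by simp))

-- Step B : rotational invariance
lemma radial_s12 (hA : ∀ x : ℝ × ℝ, x ≠ 0 → x.2 * pd1 V x - x.1 * pd2 V x = 0) :
    ∀ x : ℝ × ℝ, x ≠ 0 → V x = V (Real.sqrt (x.1 ^ 2 + x.2 ^ 2), 0) := by
  intro x hx
  set r := Real.sqrt (x.1 ^ 2 + x.2 ^ 2) with hrdef
  have hq : 0 < x.1 ^ 2 + x.2 ^ 2 := by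
    rcases lt_or_eq_of_le (by positivity : (0:ℝ) ≤ x.1 ^ 2 + x.2 ^ 2) with h | h
    · exact h
    · exfalso; apply hx
      have h1 : x.1 = 0 := by nlinarith [sq_nonneg x.1, sq_nonneg x.2]
      have h2 : x.2 = 0 := by nlinarith [sq_nonneg x.1, sq_nonneg x.2]
      exact Prod.ext h1 h2
  have hr : 0 < r := Real.sqrt_pos.2 hq
  have hr2 : r ^ 2 = x.1 ^ 2 + x.2 ^ 2 := Real.sq_sqrt hq.le
  have hne : ∀ θ : ℝ, ((r * Real.cos θ, r * Real.sin θ) : ℝ × ℝ) ≠ 0 := by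
    intro θ h
    rw [Prod.mk_eq_zero] at h
    have hs := Real.sin_sq_add_cos_sq θ
    have h1 : Real.cos θ = 0 := by
      rcases mul_eq_zero.1 h.1 with h' | h'
      · exact absurd h' hr.ne'
      · exact h'
    have h2 : Real.sin θ = 0 := by
      rcases mul_eq_zero.1 h.2 with h' | h'
      · exact absurd h' hr.ne'
      · exact h'
    rw [h1, h2] at hs; norm_num at hs
  have hd : ∀ θ : ℝ, HasDerivAt (fun θ => V (r * Real.cos θ, r * Real.sin θ)) 0 θ := by
    intro θ
    have hc : HasDerivAt (fun θ : ℝ => ((r * Real.cos θ, r * Real.sin θ) : ℝ × ℝ))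
        ((r * -Real.sin θ, r * Real.cos θ)) θ :=
      ((Real.hasDerivAt_cos θ).const_mul r).prodMk ((Real.hasDerivAt_sin θ).const_mul r)
    have hdiff : DifferentiableAt ℝ V (r * Real.cos θ, r * Real.sin θ) :=
      (hVat V hV _ (hne θ)).differentiableAt (by simp)
    have := hasDerivAt_pd V (r * Real.cos θ, r * Real.sin θ) hdiff
      (fun θ : ℝ => ((r * Real.cos θ, r * Real.sin θ) : ℝ × ℝ))
      ((r * -Real.sin θ, r * Real.cos θ)) θ hc rfl
    have hz : (r * -Real.sin θ) * pd1 V (r * Real.cos θ, r * Real.sin θ)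
        + (r * Real.cos θ) * pd2 V (r * Real.cos θ, r * Real.sin θ) = 0 := by
      have hAθ := hA _ (hne θ)
      simp only at hAθ
      linear_combination -hAθ
    rwa [hz] at this
  have hconst : ∀ a b : ℝ, V (r * Real.cos a, r * Real.sin a) = V (r * Real.cos b, r * Real.sin b) :=
    fun a b => is_const_of_deriv_eq_zero (fun θ => (hd θ).differentiableAt) (fun θ => (hd θ).deriv) a b
  set z : ℂ := ⟨x.1, x.2⟩ with hz
  have hz0 : z ≠ 0 := by
    intro h
    apply hx
    have h1 : z.re = 0 := by rw [h]; rfl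
    have h2 : z.im = 0 := by rw [h]; rfl
    exact Prod.ext h1 h2
  have habs : ‖z‖ = r := by
    rw [Complex.norm_def, Complex.normSq_apply]
    simp only [hz]
    rw [hrdef]
    norm_num [pow_two]
  have hcos : r * Real.cos (Complex.arg z) = x.1 := by
    rw [Complex.cos_arg hz0, habs]
    field_simp
    rfl
  have hsin : r * Real.sin (Complex.arg z) = x.2 := by
    rw [Complex.sin_arg, habs]
    field_simp
    rfl
  have := hconst (Complex.arg z) 0
  rw [hcos, hsin] at this
  simpa using this

-- Step D : V_yy on the axis
lemma axis_yy (hA : ∀ x : ℝ × ℝ, x ≠ 0 → x.2 * pd1 V x - x.1 * pd2 V x = 0) :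
    ∀ t : ℝ, t ≠ 0 → t * pd2 (pd2 V) (t, 0) = pd1 V (t, 0) := by
  intro t ht
  have hne : ((t, (0:ℝ)) : ℝ × ℝ) ≠ 0 := by
    intro h; exact ht (congrArg Prod.fst h)
  have hnes : ∀ s : ℝ, ((t, s) : ℝ × ℝ) ≠ 0 := by
    intro s h; exact ht (congrArg Prod.fst h)
  have hFeq : (fun s : ℝ => s * pd1 V (t, s)) = (fun s : ℝ => t * pd2 V (t, s)) := by
    funext s
    have := hA (t, s) (hnes s)
    simp only at this
    linarith
  have hd1 : HasDerivAt (fun s : ℝ => s * pd1 V (t, s))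
      (1 * pd1 V (t, 0) + 0 * pd2 (pd1 V) (t, 0)) 0 := by
    have hline : HasDerivAt (fun s : ℝ => pd1 V (t, s)) (pd2 (pd1 V) (t, 0)) 0 :=
      hasDerivAt_pdline2 (pd1 V) (t, 0)
        ((hp1smooth V hV (t, 0) hne).differentiableAt (by simp))
    exact (hasDerivAt_id' 0).mul hline
  have hd2 : HasDerivAt (fun s : ℝ => t * pd2 V (t, s)) (t * pd2 (pd2 V) (t, 0)) 0 := by
    have hline : HasDerivAt (fun s : ℝ => pd2 V (t, s)) (pd2 (pd2 V) (t, 0)) 0 :=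
      hasDerivAt_pdline2 (pd2 V) (t, 0)
        ((hp2smooth V hV (t, 0) hne).differentiableAt (by simp))
    exact hline.const_mul t
  rw [hFeq] at hd1
  have := hd2.unique hd1
  rw [this]; ring

-- Step E/F : the radial ODE and its solution on the positive axis
lemma axis_sol
    (hX : ∀ x : ℝ × ℝ, x ≠ 0 →
      3 * pd1 V x + x.1 * (pd1 (pd1 V) x - pd2 (pd2 V) x) + 2 * x.2 * pd1 (pd2 V) x = 0)
    (hA : ∀ x : ℝ × ℝ, x ≠ 0 → x.2 * pd1 V x - x.1 * pd2 V x = 0) :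
    ∃ m n : ℝ, ∀ t : ℝ, 0 < t → V (t, 0) = m / t + n := by
  have hline1 : ∀ t : ℝ, t ≠ 0 → HasDerivAt (fun s : ℝ => pd1 V (s, 0)) (pd1 (pd1 V) (t, 0)) t := by
    intro t ht
    have hne : ((t, (0:ℝ)) : ℝ × ℝ) ≠ 0 := fun h => ht (congrArg Prod.fst h)
    exact hasDerivAt_pdline1 (pd1 V) (t, 0)
      ((hp1smooth V hV (t, 0) hne).differentiableAt (by simp))
  have hVline1 : ∀ t : ℝ, t ≠ 0 → HasDerivAt (fun s : ℝ => V (s, 0)) (pd1 V (t, 0)) t := by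
    intro t ht
    have hne : ((t, (0:ℝ)) : ℝ × ℝ) ≠ 0 := fun h => ht (congrArg Prod.fst h)
    exact hasDerivAt_pdline1 V (t, 0)
      ((hVat V hV (t, 0) hne).differentiableAt (by simp))
  have hode : ∀ t : ℝ, 0 < t → 2 * pd1 V (t, 0) + t * pd1 (pd1 V) (t, 0) = 0 := by
    intro t ht
    have hne : ((t, (0:ℝ)) : ℝ × ℝ) ≠ 0 := fun h => ht.ne' (congrArg Prod.fst h)
    have h1 := hX (t, 0) hne
    have h2 := axis_yy V hV hA t ht.ne'
    simp only at h1
    have ht' : t ≠ 0 := ht.ne'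
    field_simp at h1
    nlinarith [h1, h2]
  -- φ(t) = t² · ∂₁V(t,0) is constant on (0,∞)
  have hφ : ∀ t ∈ Set.Ioi (0:ℝ), HasDerivAt (fun s : ℝ => s ^ 2 * pd1 V (s, 0)) 0 t := by
    intro t ht
    rw [Set.mem_Ioi] at ht
    have h := (hasDerivAt_pow 2 t).mul (hline1 t ht.ne')
    refine h.congr_deriv ?_
    symm
    push_cast
    norm_num
    linear_combination (-t) * (hode t ht)
  set c := pd1 V (1, 0) with hc
  have hφconst : ∀ t : ℝ, 0 < t → t ^ 2 * pd1 V (t, 0) = c := by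
    intro t ht
    have := const_Ioi _ hφ ht one_pos
    simpa using this
  -- ψ(t) = V(t,0) + c/t is constant on (0,∞)
  have hψ : ∀ t ∈ Set.Ioi (0:ℝ), HasDerivAt (fun s : ℝ => V (s, 0) + c * s⁻¹) 0 t := by
    intro t ht
    rw [Set.mem_Ioi] at ht
    have h2 : HasDerivAt (fun s : ℝ => c * s⁻¹) (c * -(t ^ 2)⁻¹) t :=
      (hasDerivAt_inv ht.ne').const_mul c
    have := (hVline1 t ht.ne').add h2
    have hz : pd1 V (t, 0) + c * -(t ^ 2)⁻¹ = 0 := by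
      have h3 := hφconst t ht
      have ht2 : t ^ 2 ≠ 0 := pow_ne_zero 2 ht.ne'
      field_simp
      linarith [h3]
    rwa [hz] at this
  refine ⟨-c, V (1, 0) + c, fun t ht => ?_⟩
  have := const_Ioi _ hψ ht one_pos
  simp only [inv_one, mul_one] at this
  have htne : t ≠ 0 := ht.ne'
  field_simp at this ⊢
  linarith [this]

end Fwd


/-- A smooth potential `V` on `ℝ² ∖ {0}` satisfies the three Bertrand–Darboux
compatibility PDEs (P), (X), (Y) with the polar and the two parabolic Killing
tensors of the Euclidean plane if and only if `V(x) = m/‖x‖ + n` for some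
constants `m, n`, i.e. `V` is, up to an additive constant and overall scale,
the Kepler potential. -/
theorem bertrand_darboux_iff_kepler
    (V : ℝ × ℝ → ℝ) (hV : ContDiffOn ℝ (⊤ : ℕ∞) V {x : ℝ × ℝ | x ≠ 0}) :
    ((∀ x : ℝ × ℝ, x ≠ 0 →
        3 * x.2 * pd1 V x - 3 * x.1 * pd2 V x
          + x.1 * x.2 * (pd1 (pd1 V) x - pd2 (pd2 V) x)
          + (x.2 ^ 2 - x.1 ^ 2) * pd1 (pd2 V) x = 0) ∧
      (∀ x : ℝ × ℝ, x ≠ 0 →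
        3 * pd1 V x + x.1 * (pd1 (pd1 V) x - pd2 (pd2 V) x)
          + 2 * x.2 * pd1 (pd2 V) x = 0) ∧
      (∀ x : ℝ × ℝ, x ≠ 0 →
        3 * pd2 V x + x.2 * (pd2 (pd2 V) x - pd1 (pd1 V) x)
          + 2 * x.1 * pd1 (pd2 V) x = 0)) ↔
    ∃ m n : ℝ, ∀ x : ℝ × ℝ, x ≠ 0 →
      V x = m / Real.sqrt (x.1 ^ 2 + x.2 ^ 2) + n := by
  constructor
  · rintro ⟨hP, hX, hY⟩
    have hA : ∀ x : ℝ × ℝ, x ≠ 0 → x.2 * pd1 V x - x.1 * pd2 V x = 0 := by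
      intro x hx
      linear_combination (2 * (hP x hx) - x.2 * (hX x hx) + x.1 * (hY x hx)) / 3
    obtain ⟨m, n, hmn⟩ := axis_sol V hV hX hA
    refine ⟨m, n, fun x hx => ?_⟩
    rw [radial_s12 V hV hA x hx]
    exact hmn _ (Real.sqrt_pos.2 (pos_of_ne x hx))
  · rintro ⟨m, n, hK⟩
    exact ⟨revP V m n hK, revX V m n hK, revY V m n hK⟩
end

section
/- Let V : ℝ² ∖ {0} → ℝ be smooth and suppose that for every (β₄,β₅,β₆) ∈ ℝ³ the potential V is compatible on ℝ² ∖ {0} with the Killing tensor of the three-parameter family whose components are K¹¹ = 2β₄x₂ + β₆x₂², K¹² = −β₄x₁ − β₅x₂ − β₆x₁x₂, K²² = 2β₅x₁ + β₆x₁² (i.e., each corresponding Bertrand–Darboux one-form is closed). Then there exist constants m, n ∈ ℝ such that V(x) = m/‖x‖ + n for all x ∈ ℝ² ∖ {0}; that is, V is the Kepler potential up to scale and an additive constant. -/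
open Real

/-- `V` is compatible on `U` with the symmetric tensor with components
`K¹¹, K¹² = K²¹, K²²` : the Bertrand–Darboux one-form
`(K¹¹∂₁V + K¹²∂₂V)dx₁ + (K¹²∂₁V + K²²∂₂V)dx₂` is closed on `U`. -/
def CompatibleWith (k11 k12 k22 : ℝ × ℝ → ℝ) (V : ℝ × ℝ → ℝ)
    (U : Set (ℝ × ℝ)) : Prop :=
  ∀ x ∈ U,
    pd2 (fun y => k11 y * pd1 V y + k12 y * pd2 V y) x
      = pd1 (fun y => k12 y * pd1 V y + k22 y * pd2 V y) x

noncomputable def Wd (V : ℝ × ℝ → ℝ) (v : ℝ × ℝ) (x : ℝ × ℝ) : ℝ := fderiv ℝ V x v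

lemma hasDerivAt_slice1 (f : ℝ × ℝ → ℝ) (x : ℝ × ℝ) (hf : DifferentiableAt ℝ f x) :
    HasDerivAt (fun t => f (t, x.2)) (Wd f (1, 0) x) x.1 := by
  have hc : HasDerivAt (fun t : ℝ => (t, x.2)) ((1 : ℝ), (0 : ℝ)) x.1 :=
    (hasDerivAt_id x.1).prodMk (hasDerivAt_const _ _)
  exact hf.hasFDerivAt.comp_hasDerivAt x.1 hc

lemma hasDerivAt_slice2 (f : ℝ × ℝ → ℝ) (x : ℝ × ℝ) (hf : DifferentiableAt ℝ f x) :
    HasDerivAt (fun t => f (x.1, t)) (Wd f (0, 1) x) x.2 := by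
  have hc : HasDerivAt (fun t : ℝ => (x.1, t)) ((0 : ℝ), (1 : ℝ)) x.2 :=
    (hasDerivAt_const _ _).prodMk (hasDerivAt_id x.2)
  exact hf.hasFDerivAt.comp_hasDerivAt x.2 hc

lemma pd1_eq (f : ℝ × ℝ → ℝ) (x : ℝ × ℝ) (hf : DifferentiableAt ℝ f x) :
    pd1 f x = Wd f (1, 0) x := (hasDerivAt_slice1 f x hf).deriv

lemma pd2_eq (f : ℝ × ℝ → ℝ) (x : ℝ × ℝ) (hf : DifferentiableAt ℝ f x) :
    pd2 f x = Wd f (0, 1) x := (hasDerivAt_slice2 f x hf).deriv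

lemma pd1_congr {f g : ℝ × ℝ → ℝ} {x : ℝ × ℝ} (h : f =ᶠ[nhds x] g) :
    pd1 f x = pd1 g x := by
  have hc : Filter.Tendsto (fun t : ℝ => (t, x.2)) (nhds x.1) (nhds x) := by
    have : Filter.Tendsto (fun t : ℝ => (t, x.2)) (nhds x.1) (nhds (x.1, x.2)) :=
      (Continuous.prodMk_left x.2).tendsto x.1
    simpa using this
  exact (h.comp_tendsto hc).deriv_eq

lemma pd2_congr {f g : ℝ × ℝ → ℝ} {x : ℝ × ℝ} (h : f =ᶠ[nhds x] g) :
    pd2 f x = pd2 g x := by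
  have hc : Filter.Tendsto (fun t : ℝ => (x.1, t)) (nhds x.2) (nhds x) := by
    have : Filter.Tendsto (fun t : ℝ => (x.1, t)) (nhds x.2) (nhds (x.1, x.2)) :=
      (Continuous.prodMk_right x.1).tendsto x.2
    simpa using this
  exact (h.comp_tendsto hc).deriv_eq

lemma hUopen : IsOpen {x : ℝ × ℝ | x ≠ 0} := isOpen_ne

lemma contDiffAt_of_ne {V : ℝ × ℝ → ℝ} (hV : ContDiffOn ℝ (⊤ : ℕ∞) V {x : ℝ × ℝ | x ≠ 0})
    {x : ℝ × ℝ} (hx : x ≠ 0) : ContDiffAt ℝ (⊤ : ℕ∞) V x :=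
  hV.contDiffAt (hUopen.mem_nhds hx)

lemma Wd_contDiffAt {V : ℝ × ℝ → ℝ} (hV : ContDiffOn ℝ (⊤ : ℕ∞) V {x : ℝ × ℝ | x ≠ 0})
    {x : ℝ × ℝ} (hx : x ≠ 0) (v : ℝ × ℝ) :
    ContDiffAt ℝ (⊤ : ℕ∞) (Wd V v) x := by
  have h1 : ContDiffAt ℝ (⊤ : ℕ∞) (fderiv ℝ V) x :=
    (contDiffAt_of_ne hV hx).fderiv_right (le_of_eq rfl)
  exact (ContinuousLinearMap.apply ℝ ℝ v).contDiff.contDiffAt.comp x h1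

lemma Wd_differentiableAt {V : ℝ × ℝ → ℝ} (hV : ContDiffOn ℝ (⊤ : ℕ∞) V {x : ℝ × ℝ | x ≠ 0})
    {x : ℝ × ℝ} (hx : x ≠ 0) (v : ℝ × ℝ) :
    DifferentiableAt ℝ (Wd V v) x :=
  (Wd_contDiffAt hV hx v).differentiableAt (by simp)

lemma V_differentiableAt {V : ℝ × ℝ → ℝ} (hV : ContDiffOn ℝ (⊤ : ℕ∞) V {x : ℝ × ℝ | x ≠ 0})
    {x : ℝ × ℝ} (hx : x ≠ 0) : DifferentiableAt ℝ V x :=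
  (contDiffAt_of_ne hV hx).differentiableAt (by simp)

lemma master {V : ℝ × ℝ → ℝ} (hV : ContDiffOn ℝ (⊤ : ℕ∞) V {x : ℝ × ℝ | x ≠ 0})
    {x : ℝ × ℝ} (hx : x ≠ 0) (β₄ β₅ β₆ : ℝ)
    (heq :
      pd2 (fun y => (2 * β₄ * y.2 + β₆ * y.2 ^ 2) * pd1 V y +
        (-(β₄ * y.1) - β₅ * y.2 - β₆ * y.1 * y.2) * pd2 V y) x
      = pd1 (fun y => (-(β₄ * y.1) - β₅ * y.2 - β₆ * y.1 * y.2) * pd1 V y +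
        (2 * β₅ * y.1 + β₆ * y.1 ^ 2) * pd2 V y) x) :
    (2 * β₄ + 2 * β₆ * x.2) * Wd V (1, 0) x
      + (2 * β₄ * x.2 + β₆ * x.2 ^ 2) * Wd (Wd V (1, 0)) (0, 1) x
      + (-β₅ - β₆ * x.1) * Wd V (0, 1) x
      + (-(β₄ * x.1) - β₅ * x.2 - β₆ * x.1 * x.2) * Wd (Wd V (0, 1)) (0, 1) x
    = (-β₄ - β₆ * x.2) * Wd V (1, 0) x
      + (-(β₄ * x.1) - β₅ * x.2 - β₆ * x.1 * x.2) * Wd (Wd V (1, 0)) (1, 0) x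
      + (2 * β₅ + 2 * β₆ * x.1) * Wd V (0, 1) x
      + (2 * β₅ * x.1 + β₆ * x.1 ^ 2) * Wd (Wd V (0, 1)) (1, 0) x := by
  set W1 := Wd V (1, 0) with hW1def
  set W2 := Wd V (0, 1) with hW2def
  have hmem : {y : ℝ × ℝ | y ≠ 0} ∈ nhds x := hUopen.mem_nhds hx
  -- replace pd1 V, pd2 V by W1, W2 eventually
  have hE1 : (fun y => (2 * β₄ * y.2 + β₆ * y.2 ^ 2) * pd1 V y +
        (-(β₄ * y.1) - β₅ * y.2 - β₆ * y.1 * y.2) * pd2 V y)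
      =ᶠ[nhds x] (fun y => (2 * β₄ * y.2 + β₆ * y.2 ^ 2) * W1 y +
        (-(β₄ * y.1) - β₅ * y.2 - β₆ * y.1 * y.2) * W2 y) := by
    filter_upwards [hmem] with y hy
    rw [pd1_eq V y (V_differentiableAt hV hy), pd2_eq V y (V_differentiableAt hV hy)]
  have hE2 : (fun y => (-(β₄ * y.1) - β₅ * y.2 - β₆ * y.1 * y.2) * pd1 V y +
        (2 * β₅ * y.1 + β₆ * y.1 ^ 2) * pd2 V y)
      =ᶠ[nhds x] (fun y => (-(β₄ * y.1) - β₅ * y.2 - β₆ * y.1 * y.2) * W1 y +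
        (2 * β₅ * y.1 + β₆ * y.1 ^ 2) * W2 y) := by
    filter_upwards [hmem] with y hy
    rw [pd1_eq V y (V_differentiableAt hV hy), pd2_eq V y (V_differentiableAt hV hy)]
  rw [pd2_congr hE1, pd1_congr hE2] at heq
  -- slice HasDerivAt for W1 W2
  have hW1d := Wd_differentiableAt hV hx ((1 : ℝ), (0 : ℝ))
  have hW2d := Wd_differentiableAt hV hx ((0 : ℝ), (1 : ℝ))
  have hW1s2 : HasDerivAt (fun t => W1 (x.1, t)) (Wd W1 (0, 1) x) x.2 :=
    hasDerivAt_slice2 W1 x hW1d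
  have hW2s2 : HasDerivAt (fun t => W2 (x.1, t)) (Wd W2 (0, 1) x) x.2 :=
    hasDerivAt_slice2 W2 x hW2d
  have hW1s1 : HasDerivAt (fun t => W1 (t, x.2)) (Wd W1 (1, 0) x) x.1 :=
    hasDerivAt_slice1 W1 x hW1d
  have hW2s1 : HasDerivAt (fun t => W2 (t, x.2)) (Wd W2 (1, 0) x) x.1 :=
    hasDerivAt_slice1 W2 x hW2d
  -- coefficient derivatives, second-variable slices
  have hk11 : HasDerivAt (fun t : ℝ => 2 * β₄ * t + β₆ * t ^ 2)
      (2 * β₄ + 2 * β₆ * x.2) x.2 := by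
    have h := ((hasDerivAt_id x.2).const_mul (2 * β₄)).add
      ((hasDerivAt_pow 2 x.2).const_mul β₆)
    refine h.congr_deriv ?_
    push_cast; ring
  have hk12s2 : HasDerivAt (fun t : ℝ => -(β₄ * x.1) - β₅ * t - β₆ * x.1 * t)
      (-β₅ - β₆ * x.1) x.2 := by
    have h := (((hasDerivAt_const x.2 (-(β₄ * x.1))).sub
      ((hasDerivAt_id x.2).const_mul β₅)).sub ((hasDerivAt_id x.2).const_mul (β₆ * x.1)))
    refine h.congr_deriv ?_
    ring
  have hk12s1 : HasDerivAt (fun t : ℝ => -(β₄ * t) - β₅ * x.2 - β₆ * t * x.2)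
      (-β₄ - β₆ * x.2) x.1 := by
    have h : HasDerivAt (fun t : ℝ => -(β₄ * t) - β₅ * x.2 - β₆ * t * x.2)
        (-(β₄ * 1) - 0 - β₆ * 1 * x.2) x.1 :=
      (((hasDerivAt_id x.1).const_mul β₄).neg.sub (hasDerivAt_const x.1 (β₅ * x.2))).sub
        (((hasDerivAt_id x.1).const_mul β₆).mul_const x.2)
    convert h using 1
    ring
  have hk22 : HasDerivAt (fun t : ℝ => 2 * β₅ * t + β₆ * t ^ 2)
      (2 * β₅ + 2 * β₆ * x.1) x.1 := by
    have h := ((hasDerivAt_id x.1).const_mul (2 * β₅)).add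
      ((hasDerivAt_pow 2 x.1).const_mul β₆)
    refine h.congr_deriv ?_
    push_cast; ring
  have hL : HasDerivAt (fun t => (2 * β₄ * t + β₆ * t ^ 2) * W1 (x.1, t) +
      (-(β₄ * x.1) - β₅ * t - β₆ * x.1 * t) * W2 (x.1, t))
      ((2 * β₄ + 2 * β₆ * x.2) * W1 x + (2 * β₄ * x.2 + β₆ * x.2 ^ 2) * Wd W1 (0, 1) x
        + ((-β₅ - β₆ * x.1) * W2 x +
          (-(β₄ * x.1) - β₅ * x.2 - β₆ * x.1 * x.2) * Wd W2 (0, 1) x)) x.2 := by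
    have h := (hk11.mul hW1s2).add (hk12s2.mul hW2s2)
    exact h
  have hR : HasDerivAt (fun t => (-(β₄ * t) - β₅ * x.2 - β₆ * t * x.2) * W1 (t, x.2) +
      (2 * β₅ * t + β₆ * t ^ 2) * W2 (t, x.2))
      ((-β₄ - β₆ * x.2) * W1 x + (-(β₄ * x.1) - β₅ * x.2 - β₆ * x.1 * x.2) * Wd W1 (1, 0) x
        + ((2 * β₅ + 2 * β₆ * x.1) * W2 x + (2 * β₅ * x.1 + β₆ * x.1 ^ 2) * Wd W2 (1, 0) x)) x.1 := by
    have h := (hk12s1.mul hW1s1).add (hk22.mul hW2s1)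
    exact h
  have hLe : pd2 (fun y => (2 * β₄ * y.2 + β₆ * y.2 ^ 2) * W1 y +
      (-(β₄ * y.1) - β₅ * y.2 - β₆ * y.1 * y.2) * W2 y) x
      = (2 * β₄ + 2 * β₆ * x.2) * W1 x + (2 * β₄ * x.2 + β₆ * x.2 ^ 2) * Wd W1 (0, 1) x
        + ((-β₅ - β₆ * x.1) * W2 x +
          (-(β₄ * x.1) - β₅ * x.2 - β₆ * x.1 * x.2) * Wd W2 (0, 1) x) := hL.deriv
  have hRe : pd1 (fun y => (-(β₄ * y.1) - β₅ * y.2 - β₆ * y.1 * y.2) * W1 y +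
      (2 * β₅ * y.1 + β₆ * y.1 ^ 2) * W2 y) x
      = (-β₄ - β₆ * x.2) * W1 x + (-(β₄ * x.1) - β₅ * x.2 - β₆ * x.1 * x.2) * Wd W1 (1, 0) x
        + ((2 * β₅ + 2 * β₆ * x.1) * W2 x + (2 * β₅ * x.1 + β₆ * x.1 ^ 2) * Wd W2 (1, 0) x) := hR.deriv
  rw [hLe, hRe] at heq
  linarith [heq]

lemma fderiv_pair_apply (L : ℝ × ℝ →L[ℝ] ℝ) (a b : ℝ) :
    L (a, b) = a * L (1, 0) + b * L (0, 1) := by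
  have h : (a, b) = a • ((1 : ℝ), (0 : ℝ)) + b • ((0 : ℝ), (1 : ℝ)) := by
    simp [Prod.ext_iff]
  rw [h, map_add, map_smul, map_smul]; simp

lemma const_of_hasDerivAt_zero_Ioi {φ : ℝ → ℝ}
    (h : ∀ t ∈ Set.Ioi (0 : ℝ), HasDerivAt φ 0 t) {a b : ℝ}
    (ha : a ∈ Set.Ioi (0 : ℝ)) (hb : b ∈ Set.Ioi (0 : ℝ)) : φ a = φ b := by
  refine (convex_Ioi (0 : ℝ)).is_const_of_fderivWithin_eq_zero
    (fun t ht => ((h t ht).differentiableAt).differentiableWithinAt) (fun t ht => ?_) ha hb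
  rw [fderivWithin_of_isOpen isOpen_Ioi ht, (h t ht).hasFDerivAt.fderiv]
  ext; simp

section main
variable {V : ℝ × ℝ → ℝ}

/-- rotational invariance -/
lemma rot_inv (hV : ContDiffOn ℝ (⊤ : ℕ∞) V {x : ℝ × ℝ | x ≠ 0})
    (hM : ∀ β₄ β₅ β₆ : ℝ, ∀ x : ℝ × ℝ, x ≠ 0 →
      (2 * β₄ + 2 * β₆ * x.2) * Wd V (1, 0) x
      + (2 * β₄ * x.2 + β₆ * x.2 ^ 2) * Wd (Wd V (1, 0)) (0, 1) x
      + (-β₅ - β₆ * x.1) * Wd V (0, 1) x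
      + (-(β₄ * x.1) - β₅ * x.2 - β₆ * x.1 * x.2) * Wd (Wd V (0, 1)) (0, 1) x
    = (-β₄ - β₆ * x.2) * Wd V (1, 0) x
      + (-(β₄ * x.1) - β₅ * x.2 - β₆ * x.1 * x.2) * Wd (Wd V (1, 0)) (1, 0) x
      + (2 * β₅ + 2 * β₆ * x.1) * Wd V (0, 1) x
      + (2 * β₅ * x.1 + β₆ * x.1 ^ 2) * Wd (Wd V (0, 1)) (1, 0) x)
    {x : ℝ × ℝ} (hx : x ≠ 0) :
    x.2 * Wd V (1, 0) x = x.1 * Wd V (0, 1) x := by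
  have h4 := hM 1 0 0 x hx
  have h5 := hM 0 1 0 x hx
  have h6 := hM 0 0 1 x hx
  linear_combination (2/3) * h6 - (x.2/3) * h4 - (x.1/3) * h5

/-- differentiated rotational invariance in the second variable -/
lemma rot_inv_deriv (hV : ContDiffOn ℝ (⊤ : ℕ∞) V {x : ℝ × ℝ | x ≠ 0})
    (hrot : ∀ y : ℝ × ℝ, y ≠ 0 → y.2 * Wd V (1, 0) y = y.1 * Wd V (0, 1) y)
    {x : ℝ × ℝ} (hx : x ≠ 0) :
    Wd V (1, 0) x + x.2 * Wd (Wd V (1, 0)) (0, 1) x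
      - x.1 * Wd (Wd V (0, 1)) (0, 1) x = 0 := by
  set W1 := Wd V (1, 0)
  set W2 := Wd V (0, 1)
  have hmem : {y : ℝ × ℝ | y ≠ 0} ∈ nhds x := hUopen.mem_nhds hx
  have hG : (fun y : ℝ × ℝ => y.2 * W1 y - y.1 * W2 y) =ᶠ[nhds x]
      (fun _ => (0 : ℝ)) := by
    filter_upwards [hmem] with y hy
    have := hrot y hy
    simp only [sub_eq_zero, this]
  have h0 : pd2 (fun y : ℝ × ℝ => y.2 * W1 y - y.1 * W2 y) x = 0 := by
    rw [pd2_congr hG]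
    simp [pd2]
  have hW1s2 : HasDerivAt (fun t => W1 (x.1, t)) (Wd W1 (0, 1) x) x.2 :=
    hasDerivAt_slice2 W1 x (Wd_differentiableAt hV hx _)
  have hW2s2 : HasDerivAt (fun t => W2 (x.1, t)) (Wd W2 (0, 1) x) x.2 :=
    hasDerivAt_slice2 W2 x (Wd_differentiableAt hV hx _)
  have hs : HasDerivAt (fun t : ℝ => t * W1 (x.1, t) - x.1 * W2 (x.1, t))
      (1 * W1 (x.1, x.2) + x.2 * Wd W1 (0, 1) x + -(x.1 * Wd W2 (0, 1) x)) x.2 := by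
    have h := ((hasDerivAt_id x.2).mul hW1s2).sub (hW2s2.const_mul x.1)
    refine h.congr_deriv ?_
    simp only [id]; ring
  have h1 : pd2 (fun y : ℝ × ℝ => y.2 * W1 y - y.1 * W2 y) x
      = 1 * W1 (x.1, x.2) + x.2 * Wd W1 (0, 1) x + -(x.1 * Wd W2 (0, 1) x) := hs.deriv
  rw [h1] at h0
  simp only [Prod.mk.eta] at h0
  linarith

lemma radial_s16 (hV : ContDiffOn ℝ (⊤ : ℕ∞) V {x : ℝ × ℝ | x ≠ 0})
    (hM : ∀ β₄ β₅ β₆ : ℝ, ∀ x : ℝ × ℝ, x ≠ 0 →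
      (2 * β₄ + 2 * β₆ * x.2) * Wd V (1, 0) x
      + (2 * β₄ * x.2 + β₆ * x.2 ^ 2) * Wd (Wd V (1, 0)) (0, 1) x
      + (-β₅ - β₆ * x.1) * Wd V (0, 1) x
      + (-(β₄ * x.1) - β₅ * x.2 - β₆ * x.1 * x.2) * Wd (Wd V (0, 1)) (0, 1) x
    = (-β₄ - β₆ * x.2) * Wd V (1, 0) x
      + (-(β₄ * x.1) - β₅ * x.2 - β₆ * x.1 * x.2) * Wd (Wd V (1, 0)) (1, 0) x
      + (2 * β₅ + 2 * β₆ * x.1) * Wd V (0, 1) x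
      + (2 * β₅ * x.1 + β₆ * x.1 ^ 2) * Wd (Wd V (0, 1)) (1, 0) x) :
    ∃ m n : ℝ, ∀ t : ℝ, 0 < t → V (t, 0) = m / t + n := by
  have hrot : ∀ y : ℝ × ℝ, y ≠ 0 → y.2 * Wd V (1, 0) y = y.1 * Wd V (0, 1) y :=
    fun y hy => rot_inv hV hM hy
  -- the ODE along the positive x-axis
  have hODE : ∀ t : ℝ, 0 < t →
      t * Wd (Wd V (1, 0)) (1, 0) (t, 0) + 2 * Wd V (1, 0) (t, 0) = 0 := by
    intro t ht
    have hp : ((t, (0 : ℝ)) : ℝ × ℝ) ≠ 0 := by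
      simp [Prod.ext_iff, ht.ne']
    have h4 := hM 1 0 0 (t, 0) hp
    have hax := rot_inv_deriv hV hrot hp
    simp only at h4 hax
    linear_combination h4 - hax
  -- t^2 * W1(t,0) is constant on Ioi 0
  have hW1d : ∀ t : ℝ, 0 < t → DifferentiableAt ℝ (Wd V (1, 0)) ((t, 0) : ℝ × ℝ) := by
    intro t ht
    exact Wd_differentiableAt hV (by simp [Prod.ext_iff, ht.ne']) _
  set φ : ℝ → ℝ := fun t => t ^ 2 * Wd V (1, 0) (t, 0) with hφdef
  have hφ0 : ∀ t ∈ Set.Ioi (0 : ℝ), HasDerivAt φ 0 t := by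
    intro t ht
    have ht' : (0 : ℝ) < t := ht
    have hs : HasDerivAt (fun s => Wd V (1, 0) (s, 0))
        (Wd (Wd V (1, 0)) (1, 0) ((t, 0) : ℝ × ℝ)) t :=
      hasDerivAt_slice1 (Wd V (1, 0)) ((t, 0) : ℝ × ℝ) (hW1d t ht')
    have h := (hasDerivAt_pow 2 t).mul hs
    refine h.congr_deriv ?_
    push_cast
    linear_combination t * hODE t ht'
  have hφconst : ∀ t : ℝ, 0 < t → φ t = φ 1 :=
    fun t ht => const_of_hasDerivAt_zero_Ioi hφ0 ht (by norm_num)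
  set C : ℝ := φ 1 with hCdef
  have hw : ∀ t : ℝ, 0 < t → Wd V (1, 0) (t, 0) = C * (t ^ 2)⁻¹ := by
    intro t ht
    have h2 : t ^ 2 ≠ 0 := pow_ne_zero 2 ht.ne'
    have := hφconst t ht
    simp only [hφdef] at this
    field_simp
    linear_combination this
  -- V(t,0) + C/t is constant on Ioi 0
  set ψ : ℝ → ℝ := fun t => V (t, 0) + C * t⁻¹ with hψdef
  have hψ0 : ∀ t ∈ Set.Ioi (0 : ℝ), HasDerivAt ψ 0 t := by
    intro t ht
    have ht' : (0 : ℝ) < t := ht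
    have hp : ((t, (0 : ℝ)) : ℝ × ℝ) ≠ 0 := by simp [Prod.ext_iff, ht'.ne']
    have hVs : HasDerivAt (fun s => V (s, 0)) (Wd V (1, 0) ((t, 0) : ℝ × ℝ)) t :=
      hasDerivAt_slice1 V ((t, 0) : ℝ × ℝ) (V_differentiableAt hV hp)
    have hinv : HasDerivAt (fun s : ℝ => C * s⁻¹) (C * (-(t ^ 2)⁻¹)) t :=
      (hasDerivAt_inv ht'.ne').const_mul C
    have h := hVs.add hinv
    have hval : Wd V (1, 0) ((t, 0) : ℝ × ℝ) + C * (-(t ^ 2)⁻¹) = 0 := by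
      rw [hw t ht']; ring
    rw [hval] at h
    exact h
  have hψconst : ∀ t : ℝ, 0 < t → ψ t = ψ 1 :=
    fun t ht => const_of_hasDerivAt_zero_Ioi hψ0 ht (by norm_num)
  refine ⟨-C, V (1, 0) + C, fun t ht => ?_⟩
  have := hψconst t ht
  simp only [hψdef] at this
  have ht0 : t ≠ 0 := ht.ne'
  field_simp at this ⊢
  linarith [this]

lemma circle_const (hV : ContDiffOn ℝ (⊤ : ℕ∞) V {x : ℝ × ℝ | x ≠ 0})
    (hrot : ∀ y : ℝ × ℝ, y ≠ 0 → y.2 * Wd V (1, 0) y = y.1 * Wd V (0, 1) y)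
    {x : ℝ × ℝ} (hx : x ≠ 0) :
    V x = V (Real.sqrt (x.1 ^ 2 + x.2 ^ 2), 0) := by
  set r : ℝ := Real.sqrt (x.1 ^ 2 + x.2 ^ 2) with hrdef
  have hx2 : x.1 ^ 2 + x.2 ^ 2 ≠ 0 := by
    intro h
    apply hx
    have h1 : x.1 = 0 := by nlinarith [sq_nonneg x.1, sq_nonneg x.2]
    have h2 : x.2 = 0 := by nlinarith [sq_nonneg x.1, sq_nonneg x.2]
    exact Prod.ext h1 h2
  have hx2' : 0 < x.1 ^ 2 + x.2 ^ 2 :=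
    lt_of_le_of_ne (by positivity) (Ne.symm hx2)
  have hr : 0 < r := Real.sqrt_pos.mpr hx2'
  have hr2 : r ^ 2 = x.1 ^ 2 + x.2 ^ 2 := Real.sq_sqrt hx2'.le
  -- each point on the circle is nonzero
  have hpne : ∀ θ : ℝ, ((r * Real.cos θ, r * Real.sin θ) : ℝ × ℝ) ≠ 0 := by
    intro θ h
    rw [Prod.ext_iff] at h
    simp only [Prod.fst_zero, Prod.snd_zero] at h
    have := Real.sin_sq_add_cos_sq θ
    have h1 : r * Real.cos θ = 0 := h.1
    have h2 : r * Real.sin θ = 0 := h.2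
    nlinarith [hr]
  set g : ℝ → ℝ := fun θ => V (r * Real.cos θ, r * Real.sin θ) with hgdef
  have hg : ∀ θ : ℝ, HasDerivAt g 0 θ := by
    intro θ
    set p : ℝ × ℝ := (r * Real.cos θ, r * Real.sin θ) with hpdef
    have hc : HasDerivAt (fun θ : ℝ => ((r * Real.cos θ, r * Real.sin θ) : ℝ × ℝ))
        ((r * -Real.sin θ, r * Real.cos θ) : ℝ × ℝ) θ :=
      ((Real.hasDerivAt_cos θ).const_mul r).prodMk ((Real.hasDerivAt_sin θ).const_mul r)
    have hd := (V_differentiableAt hV (hpne θ)).hasFDerivAt.comp_hasDerivAt θ hc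
    have hval : fderiv ℝ V p ((r * -Real.sin θ, r * Real.cos θ) : ℝ × ℝ) = 0 := by
      rw [fderiv_pair_apply]
      have h := hrot p (hpne θ)
      simp only [hpdef] at h
      show r * -Real.sin θ * Wd V (1, 0) p + r * Real.cos θ * Wd V (0, 1) p = 0
      simp only [hpdef]
      linarith [h]
    rw [hval] at hd
    exact hd
  have hgc : g (Complex.arg (x.1 + x.2 * Complex.I)) = g 0 :=
    is_const_of_deriv_eq_zero (fun θ => (hg θ).differentiableAt)
      (fun θ => (hg θ).deriv) _ _
  set z : ℂ := x.1 + x.2 * Complex.I with hzdef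
  have hzne : z ≠ 0 := by
    intro h
    apply hx
    have h1 : z.re = 0 := by rw [h]; simp
    have h2 : z.im = 0 := by rw [h]; simp
    simp only [hzdef, Complex.add_re, Complex.ofReal_re, Complex.mul_re, Complex.I_re,
      Complex.ofReal_im, Complex.I_im, Complex.add_im, Complex.mul_im] at h1 h2
    rw [Prod.ext_iff]
    constructor
    · show x.1 = 0; linarith
    · show x.2 = 0; linarith
  have habs : ‖z‖ = r := by
    rw [hzdef, Complex.norm_add_mul_I]
  have hcos : r * Real.cos (Complex.arg z) = x.1 := by
    rw [Complex.cos_arg hzne, habs]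
    have : z.re = x.1 := by simp [hzdef]
    rw [this]
    field_simp
  have hsin : r * Real.sin (Complex.arg z) = x.2 := by
    rw [Complex.sin_arg, habs]
    have : z.im = x.2 := by simp [hzdef]
    rw [this]
    field_simp
  have h1 : g (Complex.arg z) = V x := by
    simp only [hgdef, hcos, hsin]
  have h2 : g 0 = V (r, 0) := by
    simp [hgdef]
  rw [← h1, hgc, h2]
end main

/-- A smooth potential `V` on `ℝ² ∖ {0}` that is compatible with every member of
the three-parameter family of Killing tensors `K¹¹ = 2β₄x₂ + β₆x₂²`,
`K¹² = −β₄x₁ − β₅x₂ − β₆x₁x₂`, `K²² = 2β₅x₁ + β₆x₁²` is the Kepler potential up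
to scale and an additive constant: `V(x) = m/‖x‖ + n`. -/
theorem compatible_with_three_parameter_family_imp_kepler
    (V : ℝ × ℝ → ℝ) (hV : ContDiffOn ℝ (⊤ : ℕ∞) V {x : ℝ × ℝ | x ≠ 0})
    (hcompat : ∀ β₄ β₅ β₆ : ℝ,
      CompatibleWith
        (fun x => 2 * β₄ * x.2 + β₆ * x.2 ^ 2)
        (fun x => -(β₄ * x.1) - β₅ * x.2 - β₆ * x.1 * x.2)
        (fun x => 2 * β₅ * x.1 + β₆ * x.1 ^ 2)
        V {x : ℝ × ℝ | x ≠ 0}) :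
    ∃ m n : ℝ, ∀ x : ℝ × ℝ, x ≠ 0 →
      V x = m / Real.sqrt (x.1 ^ 2 + x.2 ^ 2) + n := by
  have hM : ∀ β₄ β₅ β₆ : ℝ, ∀ x : ℝ × ℝ, x ≠ 0 →
      (2 * β₄ + 2 * β₆ * x.2) * Wd V (1, 0) x
      + (2 * β₄ * x.2 + β₆ * x.2 ^ 2) * Wd (Wd V (1, 0)) (0, 1) x
      + (-β₅ - β₆ * x.1) * Wd V (0, 1) x
      + (-(β₄ * x.1) - β₅ * x.2 - β₆ * x.1 * x.2) * Wd (Wd V (0, 1)) (0, 1) x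
    = (-β₄ - β₆ * x.2) * Wd V (1, 0) x
      + (-(β₄ * x.1) - β₅ * x.2 - β₆ * x.1 * x.2) * Wd (Wd V (1, 0)) (1, 0) x
      + (2 * β₅ + 2 * β₆ * x.1) * Wd V (0, 1) x
      + (2 * β₅ * x.1 + β₆ * x.1 ^ 2) * Wd (Wd V (0, 1)) (1, 0) x :=
    fun β₄ β₅ β₆ x hx => master hV hx β₄ β₅ β₆ (hcompat β₄ β₅ β₆ x hx)
  obtain ⟨m, n, hmn⟩ := radial_s16 hV hM
  refine ⟨m, n, fun x hx => ?_⟩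
  have hrot : ∀ y : ℝ × ℝ, y ≠ 0 → y.2 * Wd V (1, 0) y = y.1 * Wd V (0, 1) y :=
    fun y hy => rot_inv hV hM hy
  have hpos : 0 < x.1 ^ 2 + x.2 ^ 2 := by
    rcases eq_or_ne x.1 0 with h1 | h1
    · have h2 : x.2 ≠ 0 := by
        intro h2; exact hx (Prod.ext h1 h2)
      positivity
    · positivity
  rw [circle_const hV hrot hx]
  exact hmn _ (Real.sqrt_pos.mpr hpos)
end
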